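/- arXiv:1404.4864 — 5 statements merged into one kernel-verified Lean document; each statement's English description precedes it below -/
import Mathlib

section
/- Let M ∈ ℝ^{p×q} be a nonnegative matrix that contains a k×k triangular submatrix T, i.e., there exist injective maps r : {1,…,k} → {1,…,p} and c : {1,…,k} → {1,…,q} such that M_{r(i), c(i)} ≠ 0 for all i and M_{r(i), c(j)} = 0 whenever i > j. Then every psd factorization of M has size at least k; in particular, the psd rank of M is at least k. -/
open Matrix Finset

section PsdSqrtPort

open scoped MatrixOrder

noncomputable def Matrix.PosSemidef.sqrt {m : ℕ} {B : Matrix (Fin m) (Fin m) ℝ}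
    (_hB : B.PosSemidef) : Matrix (Fin m) (Fin m) ℝ :=
  CFC.sqrt B

lemma Matrix.PosSemidef.sqrt_mul_self {m : ℕ} {B : Matrix (Fin m) (Fin m) ℝ}
    (hB : B.PosSemidef) : hB.sqrt * hB.sqrt = B :=
  CFC.sqrt_mul_sqrt_self B hB.nonneg

lemma Matrix.PosSemidef.posSemidef_sqrt {m : ℕ} {B : Matrix (Fin m) (Fin m) ℝ}
    (hB : B.PosSemidef) : hB.sqrt.PosSemidef :=
  (CFC.sqrt_nonneg B).posSemidef

end PsdSqrtPort

lemma trace_mul_psd_eq {m : ℕ} (A B : Matrix (Fin m) (Fin m) ℝ) (hB : B.PosSemidef) :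
    (A * B).trace = ∑ l, (fun a => hB.sqrt a l) ⬝ᵥ A *ᵥ (fun a => hB.sqrt a l) := by
  conv_lhs => rw [← hB.sqrt_mul_self, ← mul_assoc, Matrix.trace_mul_comm]
  have hs : ∀ a l, hB.sqrt l a = hB.sqrt a l := fun a l => by
    simpa using (hB.posSemidef_sqrt.1.apply l a).symm
  simp only [Matrix.trace, Matrix.diag, Matrix.mul_apply, dotProduct, Matrix.mulVec,
    Finset.mul_sum]
  refine Finset.sum_congr rfl fun l _ => Finset.sum_congr rfl fun a _ =>
    Finset.sum_congr rfl fun b _ => ?_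
  rw [hs a l]

lemma dot_mulVec_sum {m k : ℕ} (v : Fin m → ℝ) (A : Matrix (Fin m) (Fin m) ℝ)
    (g : Fin k → ℝ) (b : Fin k → Fin m → ℝ) :
    v ⬝ᵥ A *ᵥ (∑ j, g j • b j) = ∑ j, g j * (v ⬝ᵥ A *ᵥ b j) := by
  have h1 : A *ᵥ (∑ j, g j • b j) = ∑ j, g j • (A *ᵥ b j) := by
    rw [← Matrix.mulVecLin_apply, map_sum]
    simp [Matrix.mulVecLin_apply]
  rw [h1]
  simp only [dotProduct, Matrix.mulVec, Finset.sum_apply, Pi.smul_apply, smul_eq_mul,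
    Finset.mul_sum]
  rw [Finset.sum_comm]
  exact Finset.sum_congr rfl fun j _ => Finset.sum_congr rfl fun a _ =>
    Finset.sum_congr rfl fun x _ => by ring

/-- A psd factorization of size `k` of a nonnegative matrix `M ∈ ℝ^{p×q}`:
real symmetric positive semidefinite `k×k` matrices `A₁,…,A_p` and `B₁,…,B_q`
with `M i j = trace (A i * B j)` for all `i, j`. -/
def IsPsdFactorization {p q k : ℕ} (M : Matrix (Fin p) (Fin q) ℝ)
    (A : Fin p → Matrix (Fin k) (Fin k) ℝ) (B : Fin q → Matrix (Fin k) (Fin k) ℝ) : Prop :=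
  (∀ i, (A i).PosSemidef) ∧ (∀ j, (B j).PosSemidef) ∧
    ∀ i j, M i j = Matrix.trace (A i * B j)

/-- The psd rank of a nonnegative matrix: the smallest positive integer `k` for which
a psd factorization of size `k` exists. -/
noncomputable def psdRank {p q : ℕ} (M : Matrix (Fin p) (Fin q) ℝ) : ℕ :=
  sInf {k : ℕ | 0 < k ∧ ∃ (A : Fin p → Matrix (Fin k) (Fin k) ℝ)
    (B : Fin q → Matrix (Fin k) (Fin k) ℝ), IsPsdFactorization M A B}

/-- Any nonnegative matrix has a psd factorization of size `p+1`. -/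
lemma exists_trivial_fact {p q : ℕ} (M : Matrix (Fin p) (Fin q) ℝ) (hM : ∀ i j, 0 ≤ M i j) :
    ∃ (A : Fin p → Matrix (Fin (p+1)) (Fin (p+1)) ℝ)
      (B : Fin q → Matrix (Fin (p+1)) (Fin (p+1)) ℝ), IsPsdFactorization M A B := by
  refine ⟨fun i => Matrix.diagonal (fun l => if l = i.castSucc then 1 else 0),
    fun j => Matrix.diagonal (fun l => if h : (l : ℕ) < p then M ⟨l, h⟩ j else 0), ?_, ?_, ?_⟩
  · intro i
    refine Matrix.posSemidef_diagonal_iff.mpr fun l => ?_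
    split <;> norm_num
  · intro j
    refine Matrix.posSemidef_diagonal_iff.mpr fun l => ?_
    split
    · exact hM _ _
    · exact le_refl 0
  · intro i j
    rw [Matrix.diagonal_mul_diagonal, Matrix.trace_diagonal]
    rw [Finset.sum_eq_single i.castSucc]
    · simp [Fin.is_lt]
    · intro l _ hl
      simp [hl]
    · simp

/-- If a nonnegative matrix `M` contains a `k × k` triangular submatrix
(indexed by injections `r`, `c`, with nonzero diagonal and zeros below the diagonal),
then every psd factorization of `M` has size at least `k`; in particular
`psdRank M ≥ k`. -/
theorem psdRank_ge_of_triangular_submatrix {p q k : ℕ} (M : Matrix (Fin p) (Fin q) ℝ)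
    (hM : ∀ i j, 0 ≤ M i j)
    (r : Fin k → Fin p) (c : Fin k → Fin q)
    (hr : Function.Injective r) (hc : Function.Injective c)
    (hdiag : ∀ i, M (r i) (c i) ≠ 0)
    (htri : ∀ i j : Fin k, j < i → M (r i) (c j) = 0) :
    (∀ (m : ℕ) (A : Fin p → Matrix (Fin m) (Fin m) ℝ)
        (B : Fin q → Matrix (Fin m) (Fin m) ℝ),
      IsPsdFactorization M A B → k ≤ m) ∧ k ≤ psdRank M := by
  have main : ∀ (m : ℕ) (A : Fin p → Matrix (Fin m) (Fin m) ℝ)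
      (B : Fin q → Matrix (Fin m) (Fin m) ℝ), IsPsdFactorization M A B → k ≤ m := by
    intro m A B ⟨hA, hB, hF⟩
    -- column vectors of the square roots of the `B` factors
    set v : Fin k → Fin m → Fin m → ℝ :=
      fun j l => (fun a => (hB (c j)).sqrt a l) with hv
    have htr : ∀ (i j : Fin k), M (r i) (c j) = ∑ l, v j l ⬝ᵥ (A (r i)) *ᵥ v j l :=
      fun i j => (hF (r i) (c j)).trans (trace_mul_psd_eq _ _ (hB (c j)))
    have hnn : ∀ (i : Fin k) (w : Fin m → ℝ), 0 ≤ w ⬝ᵥ (A (r i)) *ᵥ w := by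
      intro i w
      simpa using (hA (r i)).dotProduct_mulVec_nonneg w
    -- choose a good column for each diagonal entry
    have hchoice : ∀ i : Fin k, ∃ l, 0 < v i l ⬝ᵥ (A (r i)) *ᵥ v i l := by
      intro i
      by_contra h
      push_neg at h
      have : M (r i) (c i) ≤ 0 := by
        rw [htr i i]
        exact Finset.sum_nonpos fun l _ => h l
      exact hdiag i (le_antisymm this (hM _ _))
    choose ℓ hℓ using hchoice
    set b : Fin k → Fin m → ℝ := fun j => v j (ℓ j) with hb
    -- below-diagonal vanishing
    have hker : ∀ i j : Fin k, j < i → (A (r i)) *ᵥ b j = 0 := by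
      intro i j hij
      have h0 : ∑ l, v j l ⬝ᵥ (A (r i)) *ᵥ v j l = 0 := by
        rw [← htr i j, htri i j hij]
      have := (Finset.sum_eq_zero_iff_of_nonneg (fun l _ => hnn i (v j l))).mp h0 (ℓ j)
        (Finset.mem_univ _)
      have := ((hA (r i)).dotProduct_mulVec_zero_iff (v j (ℓ j))).mp (by simpa using this)
      simpa [hb] using this
    -- the chosen vectors are linearly independent
    have hli : LinearIndependent ℝ b := by
      rw [Fintype.linearIndependent_iff]
      intro g hg
      by_contra hne
      push_neg at hne
      obtain ⟨i0, hi0⟩ := hne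
      classical
      set s : Finset (Fin k) := Finset.univ.filter (fun j => g j ≠ 0) with hs
      have hsne : s.Nonempty := ⟨i0, by simp [hs, hi0]⟩
      set i := s.max' hsne with hi
      have his : i ∈ s := s.max'_mem hsne
      have hgi : g i ≠ 0 := by simpa [hs] using his
      have hmax : ∀ j, i < j → g j = 0 := by
        intro j hj
        by_contra hgj
        exact absurd (s.le_max' j (by simp [hs, hgj])) (not_le.mpr hj)
      have h0 : ∑ j, g j * (b i ⬝ᵥ (A (r i)) *ᵥ b j) = 0 := by
        rw [← dot_mulVec_sum, hg]
        simp
      rw [Finset.sum_eq_single i] at h0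
      · exact hgi (by
          have hpos := hℓ i
          have : g i * (b i ⬝ᵥ (A (r i)) *ᵥ b i) = 0 := h0
          exact (mul_eq_zero.mp this).resolve_right (ne_of_gt hpos))
      · intro j _ hj
        rcases lt_or_gt_of_ne hj with h | h
        · rw [hker i j h]
          simp
        · rw [hmax j h]
          ring
      · simp
    have := hli.fintype_card_le_finrank
    simpa using this
  refine ⟨main, ?_⟩
  have hne : {k' : ℕ | 0 < k' ∧ ∃ (A : Fin p → Matrix (Fin k') (Fin k') ℝ)
      (B : Fin q → Matrix (Fin k') (Fin k') ℝ), IsPsdFactorization M A B}.Nonempty := by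
    obtain ⟨A, B, hAB⟩ := exists_trivial_fact M hM
    exact ⟨p + 1, Nat.succ_pos p, A, B, hAB⟩
  obtain ⟨hpos, A, B, hAB⟩ := Nat.sInf_mem hne
  exact main _ A B hAB
end

section
/- Let M ∈ ℝ^{p×q} be a nonnegative matrix containing a k×k triangular submatrix: there exist injective maps r : {1,…,k} → {1,…,p} and c : {1,…,k} → {1,…,q} such that M_{r(i), c(i)} ≠ 0 for all i and M_{r(i), c(j)} = 0 whenever i > j. Suppose (A₁,…,A_p, B₁,…,B_q) is a psd factorization of M of size exactly k. Then the factor A_{r(k)} corresponding to the row of the triangular submatrix containing k−1 zeros has matrix rank exactly one. -/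
open Matrix
open scoped MatrixOrder

/-- Auxiliary: over ℝ, `trace (Mᴴ * M) = 0` forces `M = 0`. -/
lemma aux_trace_conjTranspose_mul_self_eq_zero {k : ℕ} (M : Matrix (Fin k) (Fin k) ℝ)
    (h : Matrix.trace (Mᴴ * M) = 0) : M = 0 := by
  have h' : ∑ j, ∑ i, (M i j) ^ 2 = 0 := by
    simpa [Matrix.trace, Matrix.mul_apply, Matrix.diag, Matrix.conjTranspose_apply, sq]
      using h
  have hz : ∀ j ∈ Finset.univ, ∑ i, (M i j) ^ 2 = 0 := by
    rw [← Finset.sum_eq_zero_iff_of_nonneg]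
    · exact h'
    · intro j _
      exact Finset.sum_nonneg fun i _ => sq_nonneg _
  ext i j
  have hz2 := (Finset.sum_eq_zero_iff_of_nonneg (fun i _ => sq_nonneg (M i j))).mp
    (hz j (Finset.mem_univ j)) i (Finset.mem_univ i)
  simpa using (pow_eq_zero_iff two_ne_zero).mp hz2

/-- Auxiliary: for psd matrices, zero trace of product forces zero product. -/
lemma aux_psd_mul_eq_zero_of_trace {k : ℕ} {A B : Matrix (Fin k) (Fin k) ℝ}
    (hA : A.PosSemidef) (hB : B.PosSemidef) (h : Matrix.trace (A * B) = 0) :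
    A * B = 0 := by
  set S := CFC.sqrt A with hSdef
  set T := CFC.sqrt B with hTdef
  have hS : Sᴴ = S := (CFC.sqrt_nonneg A).posSemidef.1
  have hT : Tᴴ = T := (CFC.sqrt_nonneg B).posSemidef.1
  have hSS : S * S = A := CFC.sqrt_mul_sqrt_self A hA.nonneg
  have hTT : T * T = B := CFC.sqrt_mul_sqrt_self B hB.nonneg
  have key : Matrix.trace ((S * T)ᴴ * (S * T)) = Matrix.trace (A * B) := by
    rw [Matrix.conjTranspose_mul, hS, hT]
    have e1 : T * S * (S * T) = T * A * T := by
      rw [Matrix.mul_assoc, ← Matrix.mul_assoc S S T, hSS, Matrix.mul_assoc]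
    rw [e1, Matrix.trace_mul_cycle, hTT, Matrix.trace_mul_comm]
  have hST : S * T = 0 := aux_trace_conjTranspose_mul_self_eq_zero _ (by rw [key, h])
  calc A * B = S * S * (T * T) := by rw [hSS, hTT]
    _ = S * (S * T) * T := by rw [Matrix.mul_assoc, Matrix.mul_assoc, Matrix.mul_assoc]
    _ = 0 := by rw [hST, Matrix.mul_zero, Matrix.zero_mul]

/-- If a nonnegative matrix `M` contains a `k × k` triangular submatrix
(indexed by injections `r`, `c`, with nonzero diagonal and zeros below the diagonal)
and `(A, B)` is a psd factorization of `M` of size exactly `k`, then the factor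
`A (r (k-1))` corresponding to the last row of the triangular submatrix (the row
with `k - 1` zeros) has rank exactly one. -/
theorem last_row_factor_rank_one_of_triangular_submatrix {p q k : ℕ} (hk : 0 < k)
    (M : Matrix (Fin p) (Fin q) ℝ) (hM : ∀ i j, 0 ≤ M i j)
    (r : Fin k → Fin p) (c : Fin k → Fin q)
    (hr : Function.Injective r) (hc : Function.Injective c)
    (hdiag : ∀ i, M (r i) (c i) ≠ 0)
    (htri : ∀ i j : Fin k, j < i → M (r i) (c j) = 0)
    (A : Fin p → Matrix (Fin k) (Fin k) ℝ) (B : Fin q → Matrix (Fin k) (Fin k) ℝ)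
    (hfac : IsPsdFactorization M A B) :
    (A (r ⟨k - 1, Nat.sub_lt hk Nat.one_pos⟩)).rank = 1 := by
  obtain ⟨hA, hB, hMfac⟩ := hfac
  set last : Fin k := ⟨k - 1, Nat.sub_lt hk Nat.one_pos⟩ with hlast
  -- zero entries force range ⊆ kernel
  have hker : ∀ i j : Fin k, j < i →
      LinearMap.range ((B (c j)).mulVecLin) ≤ LinearMap.ker ((A (r i)).mulVecLin) := by
    intro i j hij
    have h0 : A (r i) * B (c j) = 0 :=
      aux_psd_mul_eq_zero_of_trace (hA _) (hB _) (by rw [← hMfac]; exact htri i j hij)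
    rintro x ⟨y, rfl⟩
    have h1 : (A (r i)).mulVecLin ((B (c j)).mulVecLin y)
        = ((A (r i) * B (c j)).mulVecLin) y := by
      rw [Matrix.mulVecLin_mul]; rfl
    rw [LinearMap.mem_ker, h1, h0, Matrix.mulVecLin_zero, LinearMap.zero_apply]
  -- nonzero diagonal forces nonzero product
  have hne : ∀ i : Fin k, A (r i) * B (c i) ≠ 0 := by
    intro i h
    exact hdiag i (by rw [hMfac, h, Matrix.trace_zero])
  -- increasing chain of subspaces
  set W : ℕ → Submodule ℝ (Fin k → ℝ) := fun n =>
    ⨆ (j : Fin k) (_ : (j : ℕ) < n), LinearMap.range ((B (c j)).mulVecLin) with hW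
  have hWmono : ∀ m n : ℕ, m ≤ n → W m ≤ W n := by
    intro m n hmn
    exact iSup_mono fun j => iSup_le fun hj => le_iSup_of_le (lt_of_lt_of_le hj hmn) le_rfl
  have hWker : ∀ (n : ℕ) (i : Fin k), n ≤ (i : ℕ) →
      W n ≤ LinearMap.ker ((A (r i)).mulVecLin) := by
    intro n i hni
    refine iSup_le fun j => iSup_le fun hj => hker i j ?_
    exact Fin.lt_def.mpr (lt_of_lt_of_le hj hni)
  have hdim : ∀ n : ℕ, n ≤ k → n ≤ Module.finrank ℝ (W n) := by
    intro n
    induction n with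
    | zero => intro _; exact Nat.zero_le _
    | succ m ih =>
      intro hmk
      have hmk' : m < k := Nat.lt_of_succ_le hmk
      set jm : Fin k := ⟨m, hmk'⟩ with hjm
      -- find an element of W (m+1) not in W m
      have hABne := hne jm
      obtain ⟨y, hy⟩ : ∃ y, (A (r jm) * B (c jm)).mulVecLin y ≠ 0 := by
        by_contra hcon
        push_neg at hcon
        apply hABne
        ext a b
        have := congrFun (hcon (Pi.single b 1)) a
        simpa [Matrix.mulVecLin_apply, Matrix.mulVec_single_one, Matrix.mulVec, dotProduct,
          Matrix.mul_apply] using this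
      set x : Fin k → ℝ := (B (c jm)).mulVecLin y with hx
      have hxW : x ∈ W (m + 1) := by
        refine Submodule.mem_iSup_of_mem jm ?_
        exact Submodule.mem_iSup_of_mem (Nat.lt_succ_self m) ⟨y, rfl⟩
      have hxnk : x ∉ LinearMap.ker ((A (r jm)).mulVecLin) := by
        intro hxk
        apply hy
        rw [Matrix.mulVecLin_mul]
        exact hxk
      have hxnW : x ∉ W m := fun hxm => hxnk (hWker m jm (le_refl m) hxm)
      have hlt : W m < W (m + 1) :=
        lt_of_le_of_ne (hWmono m (m + 1) (Nat.le_succ m))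
          (fun he => hxnW (he ▸ hxW))
      have := Submodule.finrank_lt_finrank_of_lt hlt
      have h2 := ih (Nat.le_of_lt hmk')
      omega
  -- rank ≤ 1
  have hkerdim : k - 1 ≤ Module.finrank ℝ (LinearMap.ker ((A (r last)).mulVecLin)) := by
    have h1 : W (k - 1) ≤ LinearMap.ker ((A (r last)).mulVecLin) :=
      hWker (k - 1) last (le_refl _)
    calc k - 1 ≤ Module.finrank ℝ (W (k - 1)) := hdim (k - 1) (Nat.sub_le k 1)
      _ ≤ Module.finrank ℝ (LinearMap.ker ((A (r last)).mulVecLin)) :=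
        Submodule.finrank_mono h1
  have hrn : (A (r last)).rank
      + Module.finrank ℝ (LinearMap.ker ((A (r last)).mulVecLin)) = k := by
    have := LinearMap.finrank_range_add_finrank_ker ((A (r last)).mulVecLin)
    rw [Matrix.rank]
    simpa using this
  -- rank ≥ 1
  have hAne : A (r last) ≠ 0 := by
    intro h
    exact hne last (by rw [h, Matrix.zero_mul])
  have hrpos : (A (r last)).rank ≠ 0 := by
    intro h0
    apply hAne
    have hrange : LinearMap.range ((A (r last)).mulVecLin) = ⊥ :=
      Submodule.finrank_eq_zero.mp h0
    ext a b
    have hmem : (A (r last)).mulVecLin (Pi.single b 1) ∈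
        LinearMap.range ((A (r last)).mulVecLin) := ⟨_, rfl⟩
    rw [hrange, Submodule.mem_bot] at hmem
    have := congrFun hmem a
    simpa [Matrix.mulVecLin_apply, Matrix.mulVec_single_one] using this
  omega
end

section
/- Let M be the 8×6 real matrix with rows (0,0,2,1,0,1), (1,0,0,2,0,1), (0,1,2,0,0,1), (1,2,0,0,0,1), (0,0,2,1,1,0), (1,0,0,2,1,0), (0,1,2,0,1,0), (1,2,0,0,1,0). The entrywise nonnegative square root of M, i.e., the matrix whose (i,j) entry is √(M_{ij}), has (usual) rank exactly four. -/
noncomputable section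
open Matrix
set_option maxHeartbeats 1600000

private lemma cons_val_five {α : Type*} {m : ℕ} (x : α) (u : Fin (m + 5) → α) :
    vecCons x u 5 = vecHead (vecTail (vecTail (vecTail (vecTail u)))) := rfl
private lemma cons_val_six {α : Type*} {m : ℕ} (x : α) (u : Fin (m + 6) → α) :
    vecCons x u 6 = vecHead (vecTail (vecTail (vecTail (vecTail (vecTail u))))) := rfl
private lemma cons_val_seven {α : Type*} {m : ℕ} (x : α) (u : Fin (m + 7) → α) :
    vecCons x u 7 = vecHead (vecTail (vecTail (vecTail (vecTail (vecTail (vecTail u)))))) := rfl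

private def s : ℝ := Real.sqrt 2

private def S : Matrix (Fin 8) (Fin 6) ℝ :=
  !![0, 0, s, 1, 0, 1;
     1, 0, 0, s, 0, 1;
     0, 1, s, 0, 0, 1;
     1, s, 0, 0, 0, 1;
     0, 0, s, 1, 1, 0;
     1, 0, 0, s, 1, 0;
     0, 1, s, 0, 1, 0;
     1, s, 0, 0, 1, 0]

private def C : Matrix (Fin 8) (Fin 4) ℝ :=
  !![1,0,0,0; 0,1,0,0; 0,0,1,0; -s,1,s,0; 1,0,0,1; 0,1,0,1; 0,0,1,1; -s,1,s,1]

private def D : Matrix (Fin 4) (Fin 6) ℝ :=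
  !![0,0,s,1,0,1; 1,0,0,s,0,1; 0,1,s,0,0,1; 0,0,0,0,1,-1]

private def E : Matrix (Fin 4) (Fin 8) ℝ :=
  !![1,0,0,0,0,0,0,0; 0,1,0,0,0,0,0,0; 0,0,1,0,0,0,0,0; 0,0,0,0,1,0,0,0]

private def F : Matrix (Fin 6) (Fin 4) ℝ :=
  !![1,0,0,0; 0,1,0,0; 0,0,0,0; 0,0,0,0; 0,0,1,0; 0,0,0,1]

private def T : Matrix (Fin 4) (Fin 4) ℝ :=
  !![0,0,0,1; 1,0,0,1; 0,1,0,1; 0,0,1,0]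

private lemma hCD : S = C * D := by
  ext i j
  fin_cases i <;> fin_cases j <;>
    simp [S, C, D, Matrix.mul_apply, Fin.sum_univ_succ, cons_val_five, cons_val_six, cons_val_seven, Matrix.vecHead, Matrix.vecTail]

private lemma hESF : E * S * F = T := by
  ext i j
  fin_cases i <;> fin_cases j <;>
    simp [S, E, F, T, Matrix.mul_apply, Fin.sum_univ_succ, cons_val_five, cons_val_six, cons_val_seven, Matrix.vecHead, Matrix.vecTail]

private lemma hT : T.rank = 4 := by
  rw [Matrix.rank_of_isUnit T]
  · simp
  · rw [Matrix.isUnit_iff_isUnit_det]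
    simp [T, Matrix.det_succ_row_zero, Fin.sum_univ_succ, Fin.castSucc, Fin.castAdd, Fin.castLE,
      show Fin.succAbove (3 : Fin 4) (2 : Fin 3) = 2 by decide]

/-- The entrywise nonnegative square root of the explicit `8 × 6` matrix
`M` has (usual) rank exactly four. -/
theorem rank_entrywise_sqrt_M_eq_four :
    let M : Matrix (Fin 8) (Fin 6) ℝ :=
      !![0, 0, 2, 1, 0, 1;
         1, 0, 0, 2, 0, 1;
         0, 1, 2, 0, 0, 1;
         1, 2, 0, 0, 0, 1;
         0, 0, 2, 1, 1, 0;
         1, 0, 0, 2, 1, 0;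
         0, 1, 2, 0, 1, 0;
         1, 2, 0, 0, 1, 0]
    (M.map Real.sqrt).rank = 4 := by
  intro M
  have hM : M.map Real.sqrt = S := by
    ext i j
    fin_cases i <;> fin_cases j <;>
      simp [M, S, s, Matrix.map_apply, cons_val_five, cons_val_six, cons_val_seven, Matrix.vecHead, Matrix.vecTail]
  rw [hM]
  have h1 : S.rank ≤ 4 := by
    rw [hCD]
    exact (Matrix.rank_mul_le_left C D).trans (by simpa using Matrix.rank_le_width C)
  have h2 : 4 ≤ S.rank := by
    have hle : T.rank ≤ S.rank := by
      rw [← hESF, Matrix.mul_assoc]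
      exact (Matrix.rank_mul_le_right E (S * F)).trans (Matrix.rank_mul_le_left S F)
    rwa [hT] at hle
  omega
end
end

section
/- Let M be the 8×6 real matrix with rows (0,0,2,1,0,1), (1,0,0,2,0,1), (0,1,2,0,0,1), (1,2,0,0,0,1), (0,0,2,1,1,0), (1,0,0,2,1,0), (0,1,2,0,1,0), (1,2,0,0,1,0). Then M admits a psd factorization of size four, and M admits no psd factorization of size three; that is, the psd rank of M equals four. -/
/-! ### Auxiliary definitions and lemmas -/

/-- The explicit matrix of the theorem. -/
def M0 : Matrix (Fin 8) (Fin 6) ℝ :=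
  !![0, 0, 2, 1, 0, 1;
     1, 0, 0, 2, 0, 1;
     0, 1, 2, 0, 0, 1;
     1, 2, 0, 0, 0, 1;
     0, 0, 2, 1, 1, 0;
     1, 0, 0, 2, 1, 0;
     0, 1, 2, 0, 1, 0;
     1, 2, 0, 0, 1, 0]

open Matrix Finset in
lemma posSemidef_outer {n : ℕ} (v : Fin n → ℝ) :
    (Matrix.of fun p q => v p * v q : Matrix (Fin n) (Fin n) ℝ).PosSemidef := by
  refine Matrix.PosSemidef.of_dotProduct_mulVec_nonneg ?_ ?_
  · ext p q
    simp [Matrix.conjTranspose_apply, mul_comm]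
  · intro x
    have key : star x ⬝ᵥ ((Matrix.of fun p q => v p * v q) *ᵥ x) = (∑ t, v t * x t)^2 := by
      simp only [dotProduct, mulVec, of_apply, Pi.star_apply, star_trivial, sq]
      rw [Finset.sum_mul_sum]
      apply Finset.sum_congr rfl; intro p _
      rw [Finset.mul_sum]
      apply Finset.sum_congr rfl; intro q _
      ring
    rw [key]
    positivity

open Matrix Finset in
lemma trace_outer_outer {n : ℕ} (a b : Fin n → ℝ) :
    Matrix.trace ((Matrix.of fun p q => a p * a q) * (Matrix.of fun p q => b p * b q)
      : Matrix (Fin n) (Fin n) ℝ) = (∑ t, a t * b t)^2 := by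
  simp only [Matrix.trace, Matrix.diag, Matrix.mul_apply, Matrix.of_apply, sq]
  rw [Finset.sum_mul_sum]
  apply Finset.sum_congr rfl; intro i _
  apply Finset.sum_congr rfl; intro k _
  ring

/-- Rank-one vectors for the rows: `a_i`. -/
noncomputable def va : Fin 8 → Fin 4 → ℝ :=
  ![![1,0,0,0], ![0,1,0,0], ![0,0,1,0], ![-Real.sqrt 2, 1, Real.sqrt 2, 0],
    ![1,0,0,1], ![0,1,0,1], ![0,0,1,1], ![-Real.sqrt 2, 1, Real.sqrt 2, 1]]

/-- Rank-one vectors for the columns: `b_j`. -/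
noncomputable def vb : Fin 6 → Fin 4 → ℝ :=
  ![![0,1,0,0], ![0,0,1,0], ![Real.sqrt 2, 0, Real.sqrt 2, 0], ![1, Real.sqrt 2, 0, 0],
    ![0,0,0,1], ![1,1,1,-1]]

open Matrix in
/-- The explicit size-4 psd factorization of `M0`. -/
lemma exists_fact4 : ∃ (A : Fin 8 → Matrix (Fin 4) (Fin 4) ℝ)
    (B : Fin 6 → Matrix (Fin 4) (Fin 4) ℝ), IsPsdFactorization M0 A B := by
  refine ⟨fun i => Matrix.of fun p q => va i p * va i q,
          fun j => Matrix.of fun p q => vb j p * vb j q,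
          fun i => posSemidef_outer _, fun j => posSemidef_outer _, ?_⟩
  intro i j
  rw [trace_outer_outer]
  fin_cases i <;> fin_cases j <;>
    norm_num [M0, va, vb, Fin.sum_univ_four, Matrix.cons_val_two, Matrix.cons_val_three, Matrix.cons_val_four]

open Matrix in
open scoped MatrixOrder in
lemma psd_factor {k : ℕ} {A : Matrix (Fin k) (Fin k) ℝ} (hA : A.PosSemidef) :
    ∃ L : Matrix (Fin k) (Fin k) ℝ, A = Lᵀ * L := by
  obtain ⟨L, hL⟩ := CStarAlgebra.nonneg_iff_eq_star_mul_self.mp hA.nonneg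
  refine ⟨L, ?_⟩
  rw [hL]
  congr 1

open Matrix in
lemma trace_factored {k : ℕ} (L K : Matrix (Fin k) (Fin k) ℝ) :
    Matrix.trace (Lᵀ * L * (Kᵀ * K)) = ∑ s, ∑ r, (∑ t, L s t * K r t)^2 := by
  rw [Matrix.mul_assoc, Matrix.trace_mul_comm]
  have h2 : (L*(Kᵀ*K))*Lᵀ = (L*Kᵀ)*(K*Lᵀ) := by noncomm_ring
  rw [h2]
  simp only [Matrix.trace, Matrix.diag, Matrix.mul_apply, Matrix.transpose_apply, sq]
  apply Finset.sum_congr rfl; intro s _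
  apply Finset.sum_congr rfl; intro r _
  congr 1
  apply Finset.sum_congr rfl; intro t _
  ring

/-- Pad a vector in `ℝ^k` to one in `ℝ^3` by zeros. -/
def padv {k : ℕ} (u : Fin k → ℝ) : Fin 3 → ℝ :=
  fun t => if h : (t : ℕ) < k then u ⟨t, h⟩ else 0

lemma pad_dot {k : ℕ} (hk : k ≤ 3) (u w : Fin k → ℝ) :
    ∑ t, padv u t * padv w t = ∑ t, u t * w t := by
  classical
  set g : ℕ → ℝ := fun i => if h : i < k then u ⟨i, h⟩ * w ⟨i, h⟩ else 0 with hg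
  have h1 : ∑ t : Fin 3, padv u t * padv w t = ∑ i ∈ Finset.range 3, g i := by
    rw [← Fin.sum_univ_eq_sum_range]
    apply Finset.sum_congr rfl
    intro t _
    by_cases h : (t : ℕ) < k <;> simp [padv, hg, h]
  have h2 : ∑ i ∈ Finset.range k, g i = ∑ i ∈ Finset.range 3, g i := by
    apply Finset.sum_subset (Finset.range_subset_range.mpr hk)
    intro i _ hi
    rw [Finset.mem_range] at hi
    simp [hg, hi]
  have h3 : ∑ i ∈ Finset.range k, g i = ∑ t : Fin k, u t * w t := by
    rw [← Fin.sum_univ_eq_sum_range]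
    apply Finset.sum_congr rfl
    intro t _
    simp [hg, t.isLt]
  rw [h1, ← h2, h3]

lemma sum_sq_all_zero {k : ℕ} {f : Fin k → Fin k → ℝ}
    (h : ∑ s, ∑ r, (f s r)^2 = 0) : ∀ s r, f s r = 0 := by
  intro s r
  have h1 := (Finset.sum_eq_zero_iff_of_nonneg
    (fun i _ => Finset.sum_nonneg fun j _ => sq_nonneg _)).mp h s (Finset.mem_univ s)
  have h2 := (Finset.sum_eq_zero_iff_of_nonneg
    (fun j _ => sq_nonneg _)).mp h1 r (Finset.mem_univ r)
  exact pow_eq_zero_iff (two_ne_zero) |>.mp h2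

lemma exists_ne_of_sum_sq_ne {k : ℕ} {f : Fin k → Fin k → ℝ}
    (h : ∑ s, ∑ r, (f s r)^2 ≠ 0) : ∃ s r, f s r ≠ 0 := by
  by_contra hc
  push_neg at hc
  exact h (Finset.sum_eq_zero fun s _ => Finset.sum_eq_zero fun r _ => by rw [hc s r]; ring)

open Matrix in
/-- The key orthogonality chase in `ℝ³`: six vectors satisfying these (in)equalities
cannot exist. -/
lemma ortho3 (v u1 u2 u3 w2 w3 : Fin 3 → ℝ)
    (hvv : ∑ t, v t * v t ≠ 0)
    (hu2 : ∑ t, u2 t * u2 t ≠ 0)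
    (h1v : ∑ t, u1 t * v t = 0)
    (h2v : ∑ t, u2 t * v t = 0)
    (h3v : ∑ t, u3 t * v t = 0)
    (h12 : ∑ t, u1 t * w2 t = 0)
    (h22 : ∑ t, u2 t * w2 t = 0)
    (h23 : ∑ t, u2 t * w3 t = 0)
    (h32 : ∑ t, u3 t * w2 t ≠ 0)
    (h13 : ∑ t, u1 t * w3 t ≠ 0) : False := by
  have Hvv : v ⬝ᵥ v ≠ 0 := hvv
  have Hu2 : u2 ⬝ᵥ u2 ≠ 0 := hu2
  have H1v : u1 ⬝ᵥ v = 0 := h1v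
  have H2v : u2 ⬝ᵥ v = 0 := h2v
  have H3v : u3 ⬝ᵥ v = 0 := h3v
  have H12 : u1 ⬝ᵥ w2 = 0 := h12
  have H22 : u2 ⬝ᵥ w2 = 0 := h22
  have H23 : u2 ⬝ᵥ w3 = 0 := h23
  have H32 : u3 ⬝ᵥ w2 ≠ 0 := h32
  have H13 : u1 ⬝ᵥ w3 ≠ 0 := h13
  set w2' : Fin 3 → ℝ := w2 - ((w2 ⬝ᵥ v) / (v ⬝ᵥ v)) • v with hw2'
  have hvw2' : v ⬝ᵥ w2' = 0 := by
    rw [hw2', dotProduct_sub, dotProduct_smul, smul_eq_mul, div_mul_cancel₀ _ Hvv,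
      dotProduct_comm, sub_self]
  have hu1w2' : u1 ⬝ᵥ w2' = 0 := by
    rw [hw2', dotProduct_sub, dotProduct_smul, H12, H1v, smul_eq_mul, mul_zero, sub_zero]
  have hu2w2' : u2 ⬝ᵥ w2' = 0 := by
    rw [hw2', dotProduct_sub, dotProduct_smul, H22, H2v, smul_eq_mul, mul_zero, sub_zero]
  have hu3w2' : u3 ⬝ᵥ w2' ≠ 0 := by
    rw [hw2', dotProduct_sub, dotProduct_smul, H3v, smul_eq_mul, mul_zero, sub_zero]
    exact H32
  have hw2'w2' : w2' ⬝ᵥ w2' ≠ 0 := by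
    intro h0
    exact hu3w2' (by rw [dotProduct_self_eq_zero.mp h0, dotProduct_zero])
  set x : Fin 3 → ℝ := u1 - ((u1 ⬝ᵥ u2) / (u2 ⬝ᵥ u2)) • u2 with hx
  have hxv : x ⬝ᵥ v = 0 := by
    rw [hx, sub_dotProduct, smul_dotProduct, H1v, H2v, smul_eq_mul, mul_zero, sub_zero]
  have hxw2' : x ⬝ᵥ w2' = 0 := by
    rw [hx, sub_dotProduct, smul_dotProduct, hu1w2', hu2w2', smul_eq_mul, mul_zero, sub_zero]
  have hxu2 : x ⬝ᵥ u2 = 0 := by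
    rw [hx, sub_dotProduct, smul_dotProduct, smul_eq_mul, div_mul_cancel₀ _ Hu2, sub_self]
  set P : Matrix (Fin 3) (Fin 3) ℝ := Matrix.of ![v, w2', u2] with hP
  have entry : ∀ i j, (P * Pᵀ) i j = (![v, w2', u2] i) ⬝ᵥ (![v, w2', u2] j) := by
    intro i j
    simp only [hP, Matrix.mul_apply, Matrix.transpose_apply, Matrix.of_apply]
    rfl
  have hPPT : P * Pᵀ = Matrix.diagonal ![v ⬝ᵥ v, w2' ⬝ᵥ w2', u2 ⬝ᵥ u2] := by
    ext i j
    rw [entry]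
    fin_cases i <;> fin_cases j <;>
      simp only [Fin.zero_eta, Fin.mk_one, Matrix.cons_val_zero, Matrix.cons_val_one,
        Matrix.head_cons, Matrix.cons_val_two, Matrix.tail_cons]
    · rw [Matrix.diagonal_apply_eq]; simp only [Matrix.cons_val_zero]
    · rw [Matrix.diagonal_apply_ne _ (by decide)]; exact hvw2'
    · rw [Matrix.diagonal_apply_ne _ (by decide)]
      rw [dotProduct_comm]; exact H2v
    · rw [Matrix.diagonal_apply_ne _ (by decide)]
      rw [dotProduct_comm]; exact hvw2'
    · rw [Matrix.diagonal_apply_eq]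
      simp only [Matrix.cons_val_one, Matrix.head_cons, Matrix.cons_val_zero]
    · rw [Matrix.diagonal_apply_ne _ (by decide)]
      rw [dotProduct_comm]; exact hu2w2'
    · rw [Matrix.diagonal_apply_ne _ (by decide)]; exact H2v
    · rw [Matrix.diagonal_apply_ne _ (by decide)]; exact hu2w2'
    · rw [Matrix.diagonal_apply_eq]; rfl
  have hdet : P.det ≠ 0 := by
    have h1 : P.det * P.det = (P * Pᵀ).det := by rw [Matrix.det_mul, Matrix.det_transpose]
    have h2 : (P * Pᵀ).det ≠ 0 := by
      rw [hPPT, Matrix.det_diagonal, Fin.prod_univ_three]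
      simp only [Matrix.cons_val_zero, Matrix.cons_val_one, Matrix.head_cons,
        Matrix.cons_val_two, Matrix.tail_cons]
      exact mul_ne_zero (mul_ne_zero Hvv hw2'w2') Hu2
    intro h0
    rw [h0, mul_zero] at h1
    exact h2 h1.symm
  have hvec : ∀ i, (P *ᵥ x) i = (![v, w2', u2] i) ⬝ᵥ x := fun i => rfl
  have hPx : P *ᵥ x = 0 := by
    ext i
    rw [hvec i]
    fin_cases i <;>
      simp only [Matrix.cons_val_zero, Matrix.cons_val_one, Matrix.head_cons,
        Matrix.cons_val_two, Matrix.tail_cons, Pi.zero_apply]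
    · rw [dotProduct_comm]; exact hxv
    · rw [dotProduct_comm]; exact hxw2'
    · rw [dotProduct_comm]; exact hxu2
  have hx0 : x = 0 := by
    have hu : IsUnit P.det := isUnit_iff_ne_zero.mpr hdet
    calc x = (1 : Matrix (Fin 3) (Fin 3) ℝ) *ᵥ x := (Matrix.one_mulVec x).symm
    _ = (P⁻¹ * P) *ᵥ x := by rw [Matrix.nonsing_inv_mul P hu]
    _ = P⁻¹ *ᵥ (P *ᵥ x) := by rw [← Matrix.mulVec_mulVec]
    _ = 0 := by rw [hPx, Matrix.mulVec_zero]
  have hsub : u1 - ((u1 ⬝ᵥ u2) / (u2 ⬝ᵥ u2)) • u2 = 0 := by rw [← hx]; exact hx0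
  have hu1eq : u1 = ((u1 ⬝ᵥ u2) / (u2 ⬝ᵥ u2)) • u2 := by rwa [sub_eq_zero] at hsub
  exact H13 (by rw [hu1eq, smul_dotProduct, H23, smul_eq_mul, mul_zero])

open Matrix in
/-- `M0` admits no psd factorization of any size `k ≤ 3`. -/
lemma no_small {k : ℕ} (hk : k ≤ 3)
    (A : Fin 8 → Matrix (Fin k) (Fin k) ℝ) (B : Fin 6 → Matrix (Fin k) (Fin k) ℝ)
    (h : IsPsdFactorization M0 A B) : False := by
  obtain ⟨hA, hB, hM⟩ := h
  choose L hL using fun i => psd_factor (hA i)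
  choose K hK using fun j => psd_factor (hB j)
  have key : ∀ i j, M0 i j = ∑ s, ∑ r, (∑ t, L i s t * K j r t)^2 := by
    intro i j
    rw [hM i j, hL i, hK j, trace_factored]
  obtain ⟨s0, r0, h00⟩ := exists_ne_of_sum_sq_ne
    (show ∑ s, ∑ r, (∑ t, L 4 s t * K 4 r t)^2 ≠ 0 by rw [← key 4 4]; norm_num [M0, Matrix.cons_val_two, Matrix.cons_val_three, Matrix.cons_val_four])
  obtain ⟨s1, r3, h13⟩ := exists_ne_of_sum_sq_ne
    (show ∑ s, ∑ r, (∑ t, L 0 s t * K 2 r t)^2 ≠ 0 by rw [← key 0 2]; norm_num [M0, Matrix.cons_val_two, Matrix.cons_val_three, Matrix.cons_val_four])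
  obtain ⟨s2, rx, h2x⟩ := exists_ne_of_sum_sq_ne
    (show ∑ s, ∑ r, (∑ t, L 1 s t * K 0 r t)^2 ≠ 0 by rw [← key 1 0]; norm_num [M0, Matrix.cons_val_two, Matrix.cons_val_three, Matrix.cons_val_four])
  obtain ⟨s3, r2, h32⟩ := exists_ne_of_sum_sq_ne
    (show ∑ s, ∑ r, (∑ t, L 2 s t * K 1 r t)^2 ≠ 0 by rw [← key 2 1]; norm_num [M0, Matrix.cons_val_two, Matrix.cons_val_three, Matrix.cons_val_four])
  have z04 := sum_sq_all_zero
    (show ∑ s, ∑ r, (∑ t, L 0 s t * K 4 r t)^2 = 0 by rw [← key 0 4]; norm_num [M0, Matrix.cons_val_two, Matrix.cons_val_three, Matrix.cons_val_four])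
  have z14 := sum_sq_all_zero
    (show ∑ s, ∑ r, (∑ t, L 1 s t * K 4 r t)^2 = 0 by rw [← key 1 4]; norm_num [M0, Matrix.cons_val_two, Matrix.cons_val_three, Matrix.cons_val_four])
  have z24 := sum_sq_all_zero
    (show ∑ s, ∑ r, (∑ t, L 2 s t * K 4 r t)^2 = 0 by rw [← key 2 4]; norm_num [M0, Matrix.cons_val_two, Matrix.cons_val_three, Matrix.cons_val_four])
  have z01 := sum_sq_all_zero
    (show ∑ s, ∑ r, (∑ t, L 0 s t * K 1 r t)^2 = 0 by rw [← key 0 1]; norm_num [M0, Matrix.cons_val_two, Matrix.cons_val_three, Matrix.cons_val_four])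
  have z11 := sum_sq_all_zero
    (show ∑ s, ∑ r, (∑ t, L 1 s t * K 1 r t)^2 = 0 by rw [← key 1 1]; norm_num [M0, Matrix.cons_val_two, Matrix.cons_val_three, Matrix.cons_val_four])
  have z12 := sum_sq_all_zero
    (show ∑ s, ∑ r, (∑ t, L 1 s t * K 2 r t)^2 = 0 by rw [← key 1 2]; norm_num [M0, Matrix.cons_val_two, Matrix.cons_val_three, Matrix.cons_val_four])
  have hvne : (fun t => K 4 r0 t) ≠ 0 := by
    intro h0
    apply h00
    have hz : ∀ t, K 4 r0 t = 0 := fun t => congrFun h0 t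
    simp [hz]
  have hvv : ∑ t, K 4 r0 t * K 4 r0 t ≠ 0 :=
    fun h0 => hvne (dotProduct_self_eq_zero.mp h0)
  have hu2ne : (fun t => L 1 s2 t) ≠ 0 := by
    intro h0
    apply h2x
    have hz : ∀ t, L 1 s2 t = 0 := fun t => congrFun h0 t
    simp [hz]
  have hu2u2 : ∑ t, L 1 s2 t * L 1 s2 t ≠ 0 :=
    fun h0 => hu2ne (dotProduct_self_eq_zero.mp h0)
  refine ortho3 (padv fun t => K 4 r0 t) (padv fun t => L 0 s1 t) (padv fun t => L 1 s2 t)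
    (padv fun t => L 2 s3 t) (padv fun t => K 1 r2 t) (padv fun t => K 2 r3 t)
    ?_ ?_ ?_ ?_ ?_ ?_ ?_ ?_ ?_ ?_
  · rw [pad_dot hk]; exact hvv
  · rw [pad_dot hk]; exact hu2u2
  · rw [pad_dot hk]; exact z04 s1 r0
  · rw [pad_dot hk]; exact z14 s2 r0
  · rw [pad_dot hk]; exact z24 s3 r0
  · rw [pad_dot hk]; exact z01 s1 r2
  · rw [pad_dot hk]; exact z11 s2 r2
  · rw [pad_dot hk]; exact z12 s2 r3
  · rw [pad_dot hk]; exact h32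
  · rw [pad_dot hk]; exact h13

/-- The explicit `8 × 6` matrix `M` admits a psd factorization of size
four and admits no psd factorization of size three; that is, `psdRank M = 4`. -/
theorem psdRank_M_eq_four :
    let M : Matrix (Fin 8) (Fin 6) ℝ :=
      !![0, 0, 2, 1, 0, 1;
         1, 0, 0, 2, 0, 1;
         0, 1, 2, 0, 0, 1;
         1, 2, 0, 0, 0, 1;
         0, 0, 2, 1, 1, 0;
         1, 0, 0, 2, 1, 0;
         0, 1, 2, 0, 1, 0;
         1, 2, 0, 0, 1, 0]
    (∃ (A : Fin 8 → Matrix (Fin 4) (Fin 4) ℝ) (B : Fin 6 → Matrix (Fin 4) (Fin 4) ℝ),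
        IsPsdFactorization M A B) ∧
    (¬ ∃ (A : Fin 8 → Matrix (Fin 3) (Fin 3) ℝ) (B : Fin 6 → Matrix (Fin 3) (Fin 3) ℝ),
        IsPsdFactorization M A B) ∧
    psdRank M = 4 := by
  intro M
  have hM : M = M0 := rfl
  refine ⟨hM ▸ exists_fact4, ?_, ?_⟩
  · rintro ⟨A, B, hf⟩
    exact no_small (le_refl 3) A B (hM ▸ hf)
  · rw [hM]
    unfold psdRank
    have h4 : 4 ∈ {k : ℕ | 0 < k ∧ ∃ (A : Fin 8 → Matrix (Fin k) (Fin k) ℝ)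
        (B : Fin 6 → Matrix (Fin k) (Fin k) ℝ), IsPsdFactorization M0 A B} :=
      ⟨by norm_num, exists_fact4⟩
    refine le_antisymm (Nat.sInf_le h4) (le_csInf ⟨4, h4⟩ ?_)
    rintro b ⟨hb0, A, B, hf⟩
    by_contra hlt
    push_neg at hlt
    exact no_small (by omega) A B hf
end

section
/- Let M be the 8×6 real matrix with rows (0,0,2,1,0,1), (1,0,0,2,0,1), (0,1,2,0,0,1), (1,2,0,0,0,1), (0,0,2,1,1,0), (1,0,0,2,1,0), (0,1,2,0,1,0), (1,2,0,0,1,0). In every psd factorization (A₁,…,A₈, B₁,…,B₆) of M of size four, each of the fourteen factors A₁,…,A₈, B₁,…,B₆ is a 4×4 positive semidefinite matrix of rank exactly one. -/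
open Matrix LinearMap Submodule Module

private lemma trace_ct_mul_self_eq_zero {m n : ℕ} {X : Matrix (Fin m) (Fin n) ℝ}
    (h : Matrix.trace (Xᴴ * X) = 0) : X = 0 := by
  have h' : ∑ j, ∑ i, X i j ^ 2 = 0 := by
    simpa [Matrix.trace, Matrix.diag, Matrix.mul_apply, Matrix.conjTranspose_apply, sq] using h
  ext i j
  have hnn : ∀ j ∈ Finset.univ, (0:ℝ) ≤ ∑ i, X i j ^ 2 :=
    fun j _ => Finset.sum_nonneg fun i _ => sq_nonneg _
  have h1 := (Finset.sum_eq_zero_iff_of_nonneg hnn).1 h' j (Finset.mem_univ _)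
  have h2 := (Finset.sum_eq_zero_iff_of_nonneg
    (fun i _ => sq_nonneg (X i j))).1 h1 i (Finset.mem_univ _)
  simpa using pow_eq_zero_iff (n := 2) (by norm_num) |>.1 h2

/-- For real psd matrices, a zero trace inner product forces the product to vanish. -/
private lemma psd_mul_eq_zero {n : ℕ} {A B : Matrix (Fin n) (Fin n) ℝ}
    (hA : A.PosSemidef) (hB : B.PosSemidef) (h : Matrix.trace (A * B) = 0) : A * B = 0 := by
  obtain ⟨C, rfl⟩ : ∃ C : Matrix (Fin n) (Fin n) ℝ, A = Cᴴ * C := by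
    open scoped MatrixOrder in
    exact CStarAlgebra.nonneg_iff_eq_star_mul_self.mp hA.nonneg
  obtain ⟨D, rfl⟩ : ∃ D : Matrix (Fin n) (Fin n) ℝ, B = Dᴴ * D := by
    open scoped MatrixOrder in
    exact CStarAlgebra.nonneg_iff_eq_star_mul_self.mp hB.nonneg
  have key : C * Dᴴ = 0 := by
    apply trace_ct_mul_self_eq_zero
    have e : (C * Dᴴ)ᴴ * (C * Dᴴ) = D * (Cᴴ * C * Dᴴ) := by
      simp [Matrix.conjTranspose_mul, Matrix.mul_assoc]
    rw [e, Matrix.trace_mul_comm]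
    simpa [Matrix.mul_assoc] using h
  calc Cᴴ*C*(Dᴴ*D) = Cᴴ * (C * Dᴴ) * D := by simp [Matrix.mul_assoc]
    _ = 0 := by rw [key]; simp

private lemma mulVecLin_zero_imp {k : ℕ} {M : Matrix (Fin k) (Fin k) ℝ}
    (h : M.mulVecLin = 0) : M = 0 := by
  ext i j
  simpa [Matrix.mulVecLin_apply, Matrix.mulVec_single] using
    congrFun (LinearMap.congr_fun h (Pi.single j 1)) i

private lemma range_le_ker_iff_mul {k : ℕ} {A B : Matrix (Fin k) (Fin k) ℝ} :
    (LinearMap.range B.mulVecLin ≤ LinearMap.ker A.mulVecLin) ↔ A * B = 0 := by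
  rw [LinearMap.range_le_ker_iff]
  constructor
  · intro h
    apply mulVecLin_zero_imp
    rw [Matrix.mulVecLin_mul, h]
  · intro h
    rw [← Matrix.mulVecLin_mul, h, Matrix.mulVecLin_zero]

/-- The key dimension-counting lemma: if `W1, W2, W3` form a strictly increasing chain
(witnessed by the maps `e, f, g`) inside the kernel of `C`, then in `ℝ⁴` the kernel of
`C` has dimension at least `3`, so `C` has rank at most one; and `W0 ⊄ ker C` gives
rank at least one. -/
private lemma rank_eq_one_aux {W0 W1 W2 W3 : Submodule ℝ (Fin 4 → ℝ)}
    {C : Matrix (Fin 4) (Fin 4) ℝ} {e f g : (Fin 4 → ℝ) →ₗ[ℝ] (Fin 4 → ℝ)}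
    (h0 : ¬ W0 ≤ LinearMap.ker C.mulVecLin)
    (h1e : ¬ W1 ≤ LinearMap.ker e)
    (h1f : W1 ≤ LinearMap.ker f) (h2f : ¬ W2 ≤ LinearMap.ker f)
    (h1g : W1 ≤ LinearMap.ker g) (h2g : W2 ≤ LinearMap.ker g)
    (h3g : ¬ W3 ≤ LinearMap.ker g)
    (k1 : W1 ≤ LinearMap.ker C.mulVecLin) (k2 : W2 ≤ LinearMap.ker C.mulVecLin)
    (k3 : W3 ≤ LinearMap.ker C.mulVecLin) :
    C.rank = 1 := by
  have hW1 : W1 ≠ ⊥ := fun h => h1e (h ▸ bot_le)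
  have d1 : 1 ≤ finrank ℝ W1 := by
    rw [Nat.one_le_iff_ne_zero, Ne, Submodule.finrank_eq_zero]; exact hW1
  have lt12 : W1 < W1 ⊔ W2 :=
    lt_of_le_of_ne le_sup_left (fun h => h2f ((le_sup_right.trans h.symm.le).trans h1f))
  have h12g : W1 ⊔ W2 ≤ LinearMap.ker g := sup_le h1g h2g
  have lt23 : W1 ⊔ W2 < W1 ⊔ W2 ⊔ W3 :=
    lt_of_le_of_ne le_sup_left (fun h => h3g ((le_sup_right.trans h.symm.le).trans h12g))
  have e12 := Submodule.finrank_lt_finrank_of_lt lt12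
  have e23 := Submodule.finrank_lt_finrank_of_lt lt23
  have hker : W1 ⊔ W2 ⊔ W3 ≤ LinearMap.ker C.mulVecLin := sup_le (sup_le k1 k2) k3
  have hk3 : finrank ℝ (W1 ⊔ W2 ⊔ W3 : Submodule ℝ (Fin 4 → ℝ)) ≤
      finrank ℝ (LinearMap.ker C.mulVecLin) := Submodule.finrank_mono hker
  have hrn := LinearMap.finrank_range_add_finrank_ker C.mulVecLin
  have hdim : finrank ℝ (Fin 4 → ℝ) = 4 := by simp
  rw [hdim] at hrn
  have hrank : C.rank = finrank ℝ (LinearMap.range C.mulVecLin) := rfl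
  have hne : C.rank ≠ 0 := by
    intro h
    apply h0
    have hb : LinearMap.range C.mulVecLin = ⊥ := by
      rw [hrank] at h; exact Submodule.finrank_eq_zero.1 h
    have hc : C.mulVecLin = 0 := LinearMap.range_eq_bot.1 hb
    rw [hc, LinearMap.ker_zero]
    exact le_top
  omega

/-- In every psd factorization `(A₁,…,A₈, B₁,…,B₆)` of the explicit
`8 × 6` matrix `M` of size four, each of the fourteen factors has rank exactly one. -/
theorem all_factors_rank_one_in_size_four_factorization :
    let M : Matrix (Fin 8) (Fin 6) ℝ :=
      !![0, 0, 2, 1, 0, 1;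
         1, 0, 0, 2, 0, 1;
         0, 1, 2, 0, 0, 1;
         1, 2, 0, 0, 0, 1;
         0, 0, 2, 1, 1, 0;
         1, 0, 0, 2, 1, 0;
         0, 1, 2, 0, 1, 0;
         1, 2, 0, 0, 1, 0]
    ∀ (A : Fin 8 → Matrix (Fin 4) (Fin 4) ℝ) (B : Fin 6 → Matrix (Fin 4) (Fin 4) ℝ),
      IsPsdFactorization M A B →
        (∀ i, (A i).rank = 1) ∧ (∀ j, (B j).rank = 1) := by
  intro M A B hfac
  obtain ⟨hA, hB, hM⟩ := hfac
  have hz : ∀ i j, M i j = 0 →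
      (LinearMap.range (B j).mulVecLin ≤ LinearMap.ker (A i).mulVecLin) ∧
      (LinearMap.range (A i).mulVecLin ≤ LinearMap.ker (B j).mulVecLin) := by
    intro i j h
    have hAB : A i * B j = 0 := psd_mul_eq_zero (hA i) (hB j) (by rw [← hM i j, h])
    have hBA : B j * A i = 0 :=
      psd_mul_eq_zero (hB j) (hA i) (by rw [Matrix.trace_mul_comm, ← hM i j, h])
    exact ⟨range_le_ker_iff_mul.2 hAB, range_le_ker_iff_mul.2 hBA⟩
  have hnz : ∀ i j, M i j ≠ 0 →
      (¬ LinearMap.range (B j).mulVecLin ≤ LinearMap.ker (A i).mulVecLin) ∧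
      (¬ LinearMap.range (A i).mulVecLin ≤ LinearMap.ker (B j).mulVecLin) := by
    intro i j h
    constructor
    · intro hle
      exact h (by rw [hM i j, range_le_ker_iff_mul.1 hle, Matrix.trace_zero])
    · intro hle
      exact h (by rw [hM i j, Matrix.trace_mul_comm, range_le_ker_iff_mul.1 hle,
        Matrix.trace_zero])
  refine ⟨?_, ?_⟩
  · intro i
    fin_cases i
    · exact rank_eq_one_aux (hnz 0 2 (ne_of_eq_of_ne (show M 0 2 = (2:ℝ) from rfl) (by norm_num))).1 (hnz 1 0 (ne_of_eq_of_ne (show M 1 0 = (1:ℝ) from rfl) (by norm_num))).1 (hz 2 0 rfl).1 (hnz 2 1 (ne_of_eq_of_ne (show M 2 1 = (1:ℝ) from rfl) (by norm_num))).1 (hz 4 0 rfl).1 (hz 4 1 rfl).1 (hnz 4 4 (ne_of_eq_of_ne (show M 4 4 = (1:ℝ) from rfl) (by norm_num))).1 (hz 0 0 rfl).1 (hz 0 1 rfl).1 (hz 0 4 rfl).1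
    · exact rank_eq_one_aux (hnz 1 0 (ne_of_eq_of_ne (show M 1 0 = (1:ℝ) from rfl) (by norm_num))).1 (hnz 3 1 (ne_of_eq_of_ne (show M 3 1 = (2:ℝ) from rfl) (by norm_num))).1 (hz 0 1 rfl).1 (hnz 0 2 (ne_of_eq_of_ne (show M 0 2 = (2:ℝ) from rfl) (by norm_num))).1 (hz 5 1 rfl).1 (hz 5 2 rfl).1 (hnz 5 4 (ne_of_eq_of_ne (show M 5 4 = (1:ℝ) from rfl) (by norm_num))).1 (hz 1 1 rfl).1 (hz 1 2 rfl).1 (hz 1 4 rfl).1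
    · exact rank_eq_one_aux (hnz 2 1 (ne_of_eq_of_ne (show M 2 1 = (1:ℝ) from rfl) (by norm_num))).1 (hnz 1 0 (ne_of_eq_of_ne (show M 1 0 = (1:ℝ) from rfl) (by norm_num))).1 (hz 0 0 rfl).1 (hnz 0 3 (ne_of_eq_of_ne (show M 0 3 = (1:ℝ) from rfl) (by norm_num))).1 (hz 6 0 rfl).1 (hz 6 3 rfl).1 (hnz 6 4 (ne_of_eq_of_ne (show M 6 4 = (1:ℝ) from rfl) (by norm_num))).1 (hz 2 0 rfl).1 (hz 2 3 rfl).1 (hz 2 4 rfl).1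
    · exact rank_eq_one_aux (hnz 3 0 (ne_of_eq_of_ne (show M 3 0 = (1:ℝ) from rfl) (by norm_num))).1 (hnz 0 2 (ne_of_eq_of_ne (show M 0 2 = (2:ℝ) from rfl) (by norm_num))).1 (hz 1 2 rfl).1 (hnz 1 3 (ne_of_eq_of_ne (show M 1 3 = (2:ℝ) from rfl) (by norm_num))).1 (hz 7 2 rfl).1 (hz 7 3 rfl).1 (hnz 7 4 (ne_of_eq_of_ne (show M 7 4 = (1:ℝ) from rfl) (by norm_num))).1 (hz 3 2 rfl).1 (hz 3 3 rfl).1 (hz 3 4 rfl).1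
    · exact rank_eq_one_aux (hnz 4 2 (ne_of_eq_of_ne (show M 4 2 = (2:ℝ) from rfl) (by norm_num))).1 (hnz 1 0 (ne_of_eq_of_ne (show M 1 0 = (1:ℝ) from rfl) (by norm_num))).1 (hz 2 0 rfl).1 (hnz 2 1 (ne_of_eq_of_ne (show M 2 1 = (1:ℝ) from rfl) (by norm_num))).1 (hz 0 0 rfl).1 (hz 0 1 rfl).1 (hnz 0 5 (ne_of_eq_of_ne (show M 0 5 = (1:ℝ) from rfl) (by norm_num))).1 (hz 4 0 rfl).1 (hz 4 1 rfl).1 (hz 4 5 rfl).1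
    · exact rank_eq_one_aux (hnz 5 0 (ne_of_eq_of_ne (show M 5 0 = (1:ℝ) from rfl) (by norm_num))).1 (hnz 3 1 (ne_of_eq_of_ne (show M 3 1 = (2:ℝ) from rfl) (by norm_num))).1 (hz 0 1 rfl).1 (hnz 0 2 (ne_of_eq_of_ne (show M 0 2 = (2:ℝ) from rfl) (by norm_num))).1 (hz 1 1 rfl).1 (hz 1 2 rfl).1 (hnz 1 5 (ne_of_eq_of_ne (show M 1 5 = (1:ℝ) from rfl) (by norm_num))).1 (hz 5 1 rfl).1 (hz 5 2 rfl).1 (hz 5 5 rfl).1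
    · exact rank_eq_one_aux (hnz 6 1 (ne_of_eq_of_ne (show M 6 1 = (1:ℝ) from rfl) (by norm_num))).1 (hnz 1 0 (ne_of_eq_of_ne (show M 1 0 = (1:ℝ) from rfl) (by norm_num))).1 (hz 0 0 rfl).1 (hnz 0 3 (ne_of_eq_of_ne (show M 0 3 = (1:ℝ) from rfl) (by norm_num))).1 (hz 2 0 rfl).1 (hz 2 3 rfl).1 (hnz 2 5 (ne_of_eq_of_ne (show M 2 5 = (1:ℝ) from rfl) (by norm_num))).1 (hz 6 0 rfl).1 (hz 6 3 rfl).1 (hz 6 5 rfl).1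
    · exact rank_eq_one_aux (hnz 7 0 (ne_of_eq_of_ne (show M 7 0 = (1:ℝ) from rfl) (by norm_num))).1 (hnz 0 2 (ne_of_eq_of_ne (show M 0 2 = (2:ℝ) from rfl) (by norm_num))).1 (hz 1 2 rfl).1 (hnz 1 3 (ne_of_eq_of_ne (show M 1 3 = (2:ℝ) from rfl) (by norm_num))).1 (hz 3 2 rfl).1 (hz 3 3 rfl).1 (hnz 3 5 (ne_of_eq_of_ne (show M 3 5 = (1:ℝ) from rfl) (by norm_num))).1 (hz 7 2 rfl).1 (hz 7 3 rfl).1 (hz 7 5 rfl).1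
  · intro j
    fin_cases j
    · exact rank_eq_one_aux (hnz 1 0 (ne_of_eq_of_ne (show M 1 0 = (1:ℝ) from rfl) (by norm_num))).2 (hnz 0 2 (ne_of_eq_of_ne (show M 0 2 = (2:ℝ) from rfl) (by norm_num))).2 (hz 0 1 rfl).2 (hnz 2 1 (ne_of_eq_of_ne (show M 2 1 = (1:ℝ) from rfl) (by norm_num))).2 (hz 0 4 rfl).2 (hz 2 4 rfl).2 (hnz 4 4 (ne_of_eq_of_ne (show M 4 4 = (1:ℝ) from rfl) (by norm_num))).2 (hz 0 0 rfl).2 (hz 2 0 rfl).2 (hz 4 0 rfl).2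
    · exact rank_eq_one_aux (hnz 3 1 (ne_of_eq_of_ne (show M 3 1 = (2:ℝ) from rfl) (by norm_num))).2 (hnz 0 2 (ne_of_eq_of_ne (show M 0 2 = (2:ℝ) from rfl) (by norm_num))).2 (hz 0 0 rfl).2 (hnz 1 0 (ne_of_eq_of_ne (show M 1 0 = (1:ℝ) from rfl) (by norm_num))).2 (hz 0 4 rfl).2 (hz 1 4 rfl).2 (hnz 4 4 (ne_of_eq_of_ne (show M 4 4 = (1:ℝ) from rfl) (by norm_num))).2 (hz 0 1 rfl).2 (hz 1 1 rfl).2 (hz 4 1 rfl).2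
    · exact rank_eq_one_aux (hnz 0 2 (ne_of_eq_of_ne (show M 0 2 = (2:ℝ) from rfl) (by norm_num))).2 (hnz 1 0 (ne_of_eq_of_ne (show M 1 0 = (1:ℝ) from rfl) (by norm_num))).2 (hz 1 1 rfl).2 (hnz 3 1 (ne_of_eq_of_ne (show M 3 1 = (2:ℝ) from rfl) (by norm_num))).2 (hz 1 4 rfl).2 (hz 3 4 rfl).2 (hnz 5 4 (ne_of_eq_of_ne (show M 5 4 = (1:ℝ) from rfl) (by norm_num))).2 (hz 1 2 rfl).2 (hz 3 2 rfl).2 (hz 5 2 rfl).2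
    · exact rank_eq_one_aux (hnz 0 3 (ne_of_eq_of_ne (show M 0 3 = (1:ℝ) from rfl) (by norm_num))).2 (hnz 2 1 (ne_of_eq_of_ne (show M 2 1 = (1:ℝ) from rfl) (by norm_num))).2 (hz 2 0 rfl).2 (hnz 3 0 (ne_of_eq_of_ne (show M 3 0 = (1:ℝ) from rfl) (by norm_num))).2 (hz 2 4 rfl).2 (hz 3 4 rfl).2 (hnz 6 4 (ne_of_eq_of_ne (show M 6 4 = (1:ℝ) from rfl) (by norm_num))).2 (hz 2 3 rfl).2 (hz 3 3 rfl).2 (hz 6 3 rfl).2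
    · exact rank_eq_one_aux (hnz 4 4 (ne_of_eq_of_ne (show M 4 4 = (1:ℝ) from rfl) (by norm_num))).2 (hnz 0 2 (ne_of_eq_of_ne (show M 0 2 = (2:ℝ) from rfl) (by norm_num))).2 (hz 0 0 rfl).2 (hnz 1 0 (ne_of_eq_of_ne (show M 1 0 = (1:ℝ) from rfl) (by norm_num))).2 (hz 0 1 rfl).2 (hz 1 1 rfl).2 (hnz 2 1 (ne_of_eq_of_ne (show M 2 1 = (1:ℝ) from rfl) (by norm_num))).2 (hz 0 4 rfl).2 (hz 1 4 rfl).2 (hz 2 4 rfl).2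
    · exact rank_eq_one_aux (hnz 0 5 (ne_of_eq_of_ne (show M 0 5 = (1:ℝ) from rfl) (by norm_num))).2 (hnz 4 2 (ne_of_eq_of_ne (show M 4 2 = (2:ℝ) from rfl) (by norm_num))).2 (hz 4 0 rfl).2 (hnz 5 0 (ne_of_eq_of_ne (show M 5 0 = (1:ℝ) from rfl) (by norm_num))).2 (hz 4 1 rfl).2 (hz 5 1 rfl).2 (hnz 6 1 (ne_of_eq_of_ne (show M 6 1 = (1:ℝ) from rfl) (by norm_num))).2 (hz 4 5 rfl).2 (hz 5 5 rfl).2 (hz 6 5 rfl).2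
end
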